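/- Let k ≥ 2, let G be a graph whose vertex set is partitioned into V_1, …, V_k with each V_i an independent set and every edge joining two distinct parts, let L ≥ 1, encode : V(G) → {0,1}^L injective, and σ_i : [k]∖{i} → [k−1] a bijection for each i ∈ [k], with associated set cover instance J(G). Suppose X ⊆ E(G) covers the universe of J(G) and for every pair {i, j} with 1 ≤ i < j ≤ k, X contains exactly one edge between V_i and V_j. Then for every i ∈ [k] and all distinct j, j' ∈ [k]∖{i}, the unique edge of X between V_i and V_j and the unique edge of X between V_i and V_{j'} have the same endpoint in V_i; consequently, for every i ∈ [k] there is a vertex v_i ∈ V_i that is an endpoint of every edge of X incident to V_i. -/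
import Mathlib


/-- The adjacency relation of the set cover instance `J(G)` associated with a graph `G`
whose vertices are partitioned into `V_1, …, V_k` via `part`: the left side is `E(G)`,
the universe is `[k] × ([k−1]^{0,1}) × [L]`, and an edge `{v, w}` with `v ∈ V_i`,
`w ∈ V_j` (`i ≠ j`) is adjacent to `(i', f, ℓ)` iff (`i' = i` and
`f (encode v ℓ) = σ_i j`) or (`i' = j` and `f (encode w ℓ) = σ_j i`). -/
def edgeAdj {V : Type} {k L : ℕ} (part : V → Fin k)
    (encode : V → Fin L → Bool)
    (σ : (i : Fin k) → {j : Fin k // j ≠ i} → Fin (k - 1))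
    (e : Sym2 V) (u : Fin k × (Bool → Fin (k - 1)) × Fin L) : Prop :=
  ∃ v w : V, e = s(v, w) ∧ part v = u.1 ∧
    ∃ hw : part w ≠ u.1, u.2.1 (encode v u.2.2) = σ u.1 ⟨part w, hw⟩

/-- Let `k ≥ 2`, `G` a graph whose vertex set is partitioned into
`V_1, …, V_k` with each `V_i` independent and every edge joining two distinct parts,
`L ≥ 1`, `encode : V(G) → {0,1}^L` injective, and `σ_i : [k]∖{i} → [k−1]` a bijection
for each `i`, with associated set cover instance `J(G)`.  Suppose `X ⊆ E(G)` covers the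
universe of `J(G)` and for every pair `{i, j}` with `i < j`, `X` contains exactly one
edge between `V_i` and `V_j`.  Then (a) for every `i` and all distinct `j, j' ≠ i`, the
unique edge of `X` between `V_i` and `V_j` and the unique edge of `X` between `V_i` and
`V_{j'}` share their endpoint in `V_i`; consequently (b) for every `i` there is a vertex
`v_i ∈ V_i` that is an endpoint of every edge of `X` incident to `V_i`. -/
theorem cover_edges_share_endpoints
    (k L : ℕ) (hk : 2 ≤ k) (hL : 1 ≤ L)
    (V : Type) (G : SimpleGraph V)
    (part : V → Fin k)
    (hpart : ∀ v w : V, G.Adj v w → part v ≠ part w)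
    (encode : V → Fin L → Bool) (henc : Function.Injective encode)
    (σ : (i : Fin k) → {j : Fin k // j ≠ i} → Fin (k - 1))
    (hσ : ∀ i, Function.Bijective (σ i))
    (X : Finset (Sym2 V)) (hXE : ∀ e ∈ X, e ∈ G.edgeSet)
    (hXcov : ∀ u : Fin k × (Bool → Fin (k - 1)) × Fin L,
      ∃ e ∈ X, edgeAdj part encode σ e u)
    (huniq : ∀ i j : Fin k, i < j →
      ∃! e : Sym2 V, e ∈ X ∧
        ∃ x y : V, e = s(x, y) ∧ part x = i ∧ part y = j) :
    (∀ i j j' : Fin k, j ≠ i → j' ≠ i → j ≠ j' →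
      ∀ e ∈ X, ∀ e' ∈ X,
        (∃ x y : V, e = s(x, y) ∧ part x = i ∧ part y = j) →
        (∃ x y : V, e' = s(x, y) ∧ part x = i ∧ part y = j') →
        ∃ z : V, part z = i ∧ z ∈ e ∧ z ∈ e') ∧
    (∀ i : Fin k, ∃ z : V, part z = i ∧
      ∀ e ∈ X, (∃ x ∈ e, part x = i) → z ∈ e) := by
  -- unordered uniqueness
  have huniq' : ∀ i j : Fin k, i ≠ j →
      ∃! e : Sym2 V, e ∈ X ∧ ∃ x y : V, e = s(x, y) ∧ part x = i ∧ part y = j := by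
    intro i j hij
    rcases lt_or_gt_of_ne hij with h | h
    · exact huniq i j h
    · obtain ⟨e, ⟨he, x, y, hxy, hx, hy⟩, hu⟩ := huniq j i h
      refine ⟨e, ⟨he, y, x, by rw [hxy, Sym2.eq_swap], hy, hx⟩, ?_⟩
      rintro e' ⟨he', x', y', hxy', hx', hy'⟩
      exact hu e' ⟨he', y', x', by rw [hxy', Sym2.eq_swap], hy', hx'⟩
  have partA : ∀ i j j' : Fin k, j ≠ i → j' ≠ i → j ≠ j' →
      ∀ e ∈ X, ∀ e' ∈ X,
        (∃ x y : V, e = s(x, y) ∧ part x = i ∧ part y = j) →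
        (∃ x y : V, e' = s(x, y) ∧ part x = i ∧ part y = j') →
        ∃ z : V, part z = i ∧ z ∈ e ∧ z ∈ e' := by
    rintro i j j' hj hj' hjj' e he e' he' ⟨x, y, hexy, hx, hy⟩ ⟨x', y', he'xy, hx', hy'⟩
    suffices hxx : x = x' by
      exact ⟨x, hx, by rw [hexy]; exact Sym2.mem_mk_left _ _,
        by rw [hxx, he'xy]; exact Sym2.mem_mk_left _ _⟩
    by_contra hne
    have hfe : encode x ≠ encode x' := fun h => hne (henc h)
    obtain ⟨ℓ, hℓ⟩ := Function.ne_iff.mp hfe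
    set b := encode x ℓ with hb
    have hbx' : encode x' ℓ = !b := by
      cases hbb : encode x' ℓ <;> cases hbbb : encode x ℓ <;> simp_all
    set f : Bool → Fin (k-1) := fun b' => if b' = b then σ i ⟨j', hj'⟩ else σ i ⟨j, hj⟩
      with hf
    obtain ⟨e'', he''X, v, w, he''vw, hv, hw, hfw⟩ := hXcov (i, f, ℓ)
    have hinj := (hσ i).injective
    by_cases hvb : encode v ℓ = b
    · have hσeq : σ i ⟨j', hj'⟩ = σ i ⟨part w, hw⟩ := by
        rw [← hfw, hf]; simp [hvb]
      have hpw : part w = j' := congrArg Subtype.val (hinj hσeq).symm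
      have heq : e'' = e' := by
        have hu := huniq' i j' (Ne.symm hj')
        exact hu.unique ⟨he''X, v, w, he''vw, hv, hpw⟩ ⟨he', x', y', he'xy, hx', hy'⟩
      have hvw : s(v, w) = s(x', y') := by rw [← he''vw, heq, he'xy]
      rcases Sym2.eq_iff.mp hvw with ⟨h1, _⟩ | ⟨h1, _⟩
      · rw [h1, hbx'] at hvb; simp at hvb
      · exact hj' (by rw [← hy', ← h1, hv])
    · have hσeq : σ i ⟨j, hj⟩ = σ i ⟨part w, hw⟩ := by
        rw [← hfw, hf]; simp [hvb]
      have hpw : part w = j := congrArg Subtype.val (hinj hσeq).symm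
      have heq : e'' = e := by
        have hu := huniq' i j (Ne.symm hj)
        exact hu.unique ⟨he''X, v, w, he''vw, hv, hpw⟩ ⟨he, x, y, hexy, hx, hy⟩
      have hvw : s(v, w) = s(x, y) := by rw [← he''vw, heq, hexy]
      rcases Sym2.eq_iff.mp hvw with ⟨h1, _⟩ | ⟨h1, _⟩
      · exact hvb (by rw [h1])
      · exact hj (by rw [← hy, ← h1, hv])
  refine ⟨partA, ?_⟩
  intro i
  have hex : ∃ j : Fin k, j ≠ i := by
    rcases eq_or_ne i ⟨0, by omega⟩ with h | h
    · exact ⟨⟨1, by omega⟩, by rw [h]; simp [Fin.ext_iff]⟩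
    · exact ⟨⟨0, by omega⟩, Ne.symm h⟩
  obtain ⟨j₀, hj₀⟩ := hex
  obtain ⟨e₀, ⟨he₀X, x₀, y₀, he₀, hx₀, hy₀⟩, hu₀⟩ := huniq' i j₀ (Ne.symm hj₀)
  refine ⟨x₀, hx₀, ?_⟩
  rintro e heX ⟨x, hxe, hxi⟩
  obtain ⟨y, hey⟩ : ∃ y, e = s(x, y) := ⟨Sym2.Mem.other hxe, (Sym2.other_spec hxe).symm⟩
  have hadj : G.Adj x y := by
    have h := hXE e heX
    rw [hey] at h
    exact h
  have hyi : part y ≠ i := by rw [← hxi]; exact (hpart x y hadj).symm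
  by_cases hyj : part y = j₀
  · have heq : e = e₀ := hu₀ e ⟨heX, x, y, hey, hxi, hyj⟩
    rw [heq, he₀]
    exact Sym2.mem_mk_left _ _
  · obtain ⟨z, hz, hze, hze₀⟩ := partA i (part y) j₀ hyi hj₀ hyj e heX e₀ he₀X
      ⟨x, y, hey, hxi, rfl⟩ ⟨x₀, y₀, he₀, hx₀, hy₀⟩
    rw [he₀] at hze₀
    rcases Sym2.mem_iff.mp hze₀ with h | h
    · rw [← h]; exact hze
    · exact absurd hz (by rw [h, hy₀]; exact hj₀)
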